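/- arXiv:math/0108082 — 2 statements merged into one kernel-verified Lean document; each statement's English description precedes it below -/
import Mathlib

section
/- Let A be a finite abelian group and μ a stationary Markov measure on A^ℤ with transition matrix Q = (q^a_b) all of whose entries are strictly positive, and stationary vector ν. Then μ is harmonically mixing: for every ε > 0 there exists K such that every character of A^ℤ of rank > 2K has Fourier coefficient of modulus < ε. -/
open MeasureTheory

/-- Evaluation at `x` of the character of `A^ℤ` with coefficient system `χ`. -/
noncomputable def charEval {A : Type*} [AddCommGroup A] (χ : ℤ → AddChar A ℂ)
    (x : ℤ → A) : ℂ :=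
  ∏ᶠ i, χ i (x i)

section AuxiliaryLemmas

open Finset
open scoped ENNReal NNReal

set_option linter.unusedSectionVars false
set_option linter.unusedVariables false

variable {A : Type*} [AddCommGroup A] [Fintype A]

/-- Two-point separation bound for strictly positive convex combinations. -/
lemma sep_bound (Q : A → A → ℝ) (hQ0 : ∀ a b, 0 ≤ Q a b) (hQrow : ∀ a, ∑ b, Q a b = 1)
    {q : ℝ} (hq : ∀ a b, q ≤ Q a b) (hq0 : 0 ≤ q)
    (u : A → ℂ) (hu : ∀ b, ‖u b‖ ≤ 1) {δ : ℝ} (hδ0 : 0 ≤ δ) (hδ2 : δ ≤ 2)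
    {b₁ b₂ : A} (hb : δ ≤ ‖u b₁ - u b₂‖) (hne : b₁ ≠ b₂) (a : A) :
    ‖∑ b, (Q a b : ℂ) * u b‖ ≤ 1 - q * δ ^ 2 / 4 := by
  classical
  set w : A → ℝ := fun b => Q a b - (if b = b₁ then q else 0) - (if b = b₂ then q else 0) with hw
  have h2q : Q a b₁ + Q a b₂ ≤ 1 := by
    have h1 : ∑ b ∈ ({b₁, b₂} : Finset A), Q a b ≤ ∑ b, Q a b :=
      Finset.sum_le_sum_of_subset_of_nonneg (Finset.subset_univ _) (fun b _ _ => hQ0 a b)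
    rwa [Finset.sum_pair hne, hQrow] at h1
  have hw0 : ∀ b, 0 ≤ w b := by
    intro b
    simp only [hw]
    split_ifs with h1 h2 h2
    · exact absurd (h1.symm.trans h2) hne
    · linarith [hq a b]
    · linarith [hq a b]
    · linarith [hQ0 a b]
  have hwsum : ∑ b, w b = 1 - 2 * q := by
    simp only [hw, Finset.sum_sub_distrib, hQrow, Finset.sum_ite_eq' Finset.univ b₁ fun _ => q,
      Finset.sum_ite_eq' Finset.univ b₂ fun _ => q, Finset.mem_univ, if_true]
    ring
  have hsplit : ∑ b, (Q a b : ℂ) * u b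
      = (q : ℂ) * u b₁ + (q : ℂ) * u b₂ + ∑ b, (w b : ℂ) * u b := by
    have hterm : ∀ b, (Q a b : ℂ) * u b
        = (if b = b₁ then (q : ℂ) * u b else 0) + (if b = b₂ then (q : ℂ) * u b else 0)
          + (w b : ℂ) * u b := by
      intro b
      simp only [hw]
      push_cast
      split_ifs with h1 h2 h2
      · exact absurd (h1.symm.trans h2) hne
      all_goals push_cast; ring
    rw [Finset.sum_congr rfl fun b _ => hterm b]
    rw [Finset.sum_add_distrib, Finset.sum_add_distrib,
      Finset.sum_ite_eq' Finset.univ b₁ fun b => (q : ℂ) * u b,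
      Finset.sum_ite_eq' Finset.univ b₂ fun b => (q : ℂ) * u b]
    simp
  -- parallelogram bound
  have hpar : ‖u b₁ + u b₂‖ ≤ 2 - δ ^ 2 / 4 := by
    have hp := parallelogram_law_with_norm ℝ (u b₁) (u b₂)
    have h1 : ‖u b₁ + u b₂‖ * ‖u b₁ + u b₂‖ ≤ 4 - δ ^ 2 := by
      nlinarith [hu b₁, hu b₂, norm_nonneg (u b₁), norm_nonneg (u b₂), hb,
        norm_nonneg (u b₁ - u b₂), norm_nonneg (u b₁ + u b₂)]
    nlinarith [norm_nonneg (u b₁ + u b₂)]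
  have hrest : ‖∑ b, (w b : ℂ) * u b‖ ≤ 1 - 2 * q := by
    calc ‖∑ b, (w b : ℂ) * u b‖ ≤ ∑ b, ‖(w b : ℂ) * u b‖ := norm_sum_le _ _
    _ ≤ ∑ b, w b := by
        refine Finset.sum_le_sum fun b _ => ?_
        rw [norm_mul, Complex.norm_real, Real.norm_of_nonneg (hw0 b)]
        exact mul_le_of_le_one_right (hw0 b) (hu b)
    _ = 1 - 2 * q := hwsum
  calc ‖∑ b, (Q a b : ℂ) * u b‖
      ≤ ‖(q : ℂ) * u b₁ + (q : ℂ) * u b₂‖ + ‖∑ b, (w b : ℂ) * u b‖ := by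
        rw [hsplit]; exact norm_add_le _ _
    _ ≤ q * (2 - δ ^ 2 / 4) + (1 - 2 * q) := by
        refine add_le_add ?_ hrest
        rw [← mul_add, norm_mul, Complex.norm_real, Real.norm_of_nonneg hq0]
        exact mul_le_mul_of_nonneg_left hpar hq0
    _ = 1 - q * δ ^ 2 / 4 := by ring

lemma conv_bound (Q : A → A → ℝ) (hQ0 : ∀ a b, 0 ≤ Q a b) (hQrow : ∀ a, ∑ b, Q a b = 1)
    {r : ℝ} (u : A → ℂ) (hu : ∀ b, ‖u b‖ ≤ r) (a : A) :
    ‖∑ b, (Q a b : ℂ) * u b‖ ≤ r := by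
  calc ‖∑ b, (Q a b : ℂ) * u b‖ ≤ ∑ b, ‖(Q a b : ℂ) * u b‖ := norm_sum_le _ _
    _ ≤ ∑ b, Q a b * r := by
        refine Finset.sum_le_sum fun b _ => ?_
        rw [norm_mul, Complex.norm_real, Real.norm_of_nonneg (hQ0 a b)]
        exact mul_le_mul_of_nonneg_left (hu b) (hQ0 a b)
    _ = r := by rw [← Finset.sum_mul, hQrow, one_mul]

lemma key_contract (Q : A → A → ℝ) (hQ0 : ∀ a b, 0 ≤ Q a b) (hQrow : ∀ a, ∑ b, Q a b = 1)
    {q : ℝ} (hq : ∀ a b, q ≤ Q a b) (hq0 : 0 ≤ q) (hq1 : q ≤ 1)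
    {δ₀ : ℝ} (hδ₀0 : 0 < δ₀) (hδ₀2 : δ₀ ≤ 2)
    (ζ : AddChar A ℂ) (hζ : ∃ b, δ₀ ≤ ‖ζ b - 1‖)
    (φ : A → ℂ) (hφ : ∀ d, ‖φ d‖ ≤ 1) (a : A) :
    ‖∑ b, (Q a b : ℂ) * (ζ b * ∑ d, (Q b d : ℂ) * φ d)‖ ≤ 1 - q * δ₀ ^ 2 / 256 := by
  classical
  set t : ℝ := δ₀ / 8 with ht
  set ψ : A → ℂ := fun b => ∑ d, (Q b d : ℂ) * φ d with hψ
  have hψ1 : ∀ b, ‖ψ b‖ ≤ 1 := fun b => conv_bound Q hQ0 hQrow φ hφ b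
  have hζnorm : ∀ b, ‖ζ b‖ = 1 := fun b => AddChar.norm_apply ζ b
  by_cases hosc : ∃ d₁ d₂, t ≤ ‖φ d₁ - φ d₂‖
  · -- oscillation case: every ψ b is small
    obtain ⟨d₁, d₂, hd⟩ := hosc
    have hdne : d₁ ≠ d₂ := by
      rintro rfl
      simp only [sub_self, norm_zero] at hd
      linarith
    have hψb : ∀ b, ‖ψ b‖ ≤ 1 - q * t ^ 2 / 4 := fun b =>
      sep_bound Q hQ0 hQrow hq hq0 φ hφ (by positivity) (by linarith) hd hdne b
    calc ‖∑ b, (Q a b : ℂ) * (ζ b * ψ b)‖ ≤ 1 - q * t ^ 2 / 4 := by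
          refine conv_bound Q hQ0 hQrow _ (fun b => ?_) a
          rw [norm_mul, hζnorm, one_mul]; exact hψb b
      _ = 1 - q * δ₀ ^ 2 / 256 := by rw [ht]; ring
  · push_neg at hosc
    set d₀ : A := 0 with hd₀
    have hψnear : ∀ b, ‖ψ b - φ d₀‖ ≤ t := by
      intro b
      have h1 : ψ b - φ d₀ = ∑ d, (Q b d : ℂ) * (φ d - φ d₀) := by
        rw [hψ]
        simp only [mul_sub, Finset.sum_sub_distrib, ← Finset.sum_mul]
        have h2 : (∑ d, (Q b d : ℂ)) = 1 := by exact_mod_cast hQrow b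
        rw [h2, one_mul]
      rw [h1]
      exact conv_bound Q hQ0 hQrow _ (fun d => le_of_lt (hosc d d₀)) b
    have ht2 : t ≤ 1 / 4 := by rw [ht]; linarith
    by_cases hsmall : ‖φ d₀‖ ≤ 1 / 2
    · -- everything small
      have hψb : ∀ b, ‖ψ b‖ ≤ 3 / 4 := by
        intro b
        calc ‖ψ b‖ = ‖(ψ b - φ d₀) + φ d₀‖ := by ring_nf
          _ ≤ ‖ψ b - φ d₀‖ + ‖φ d₀‖ := norm_add_le _ _
          _ ≤ 3 / 4 := by linarith [hψnear b]
      have : ‖∑ b, (Q a b : ℂ) * (ζ b * ψ b)‖ ≤ 3 / 4 := by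
        refine conv_bound Q hQ0 hQrow _ (fun b => ?_) a
        rw [norm_mul, hζnorm, one_mul]; exact hψb b
      have hb : q * δ₀ ^ 2 / 256 ≤ 1 / 4 := by nlinarith
      linarith
    · push_neg at hsmall
      obtain ⟨b₁, hb₁⟩ := hζ
      set u : A → ℂ := fun b => ζ b * ψ b with hu
      have hub : ∀ b, ‖u b‖ ≤ 1 := by
        intro b; rw [hu]; simp only []
        rw [norm_mul, hζnorm, one_mul]; exact hψ1 b
      have hb₁0 : b₁ ≠ (0 : A) := by
        rintro rfl
        rw [AddChar.map_zero_eq_one] at hb₁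
        simp only [sub_self, norm_zero] at hb₁
        linarith
      have hsep : δ₀ / 4 ≤ ‖u b₁ - u 0‖ := by
        have hdecomp : u b₁ - u 0
            = (ζ b₁ - 1) * φ d₀ + ζ b₁ * (ψ b₁ - φ d₀) - (ψ 0 - φ d₀) := by
          rw [hu]; simp only [AddChar.map_zero_eq_one, one_mul]; ring
        have h1 : ‖(ζ b₁ - 1) * φ d₀‖ ≥ δ₀ / 2 := by
          rw [norm_mul]
          calc δ₀ / 2 = δ₀ * (1/2) := by ring
            _ ≤ ‖ζ b₁ - 1‖ * ‖φ d₀‖ :=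
              mul_le_mul hb₁ (le_of_lt hsmall) (by norm_num) (norm_nonneg _)
        have h2 : ‖ζ b₁ * (ψ b₁ - φ d₀)‖ ≤ t := by
          rw [norm_mul, hζnorm, one_mul]; exact hψnear b₁
        have h3 : ‖ψ 0 - φ d₀‖ ≤ t := hψnear 0
        calc δ₀ / 4 = δ₀ / 2 - 2 * (δ₀ / 8) := by ring
          _ ≤ ‖(ζ b₁ - 1) * φ d₀‖ - ‖ζ b₁ * (ψ b₁ - φ d₀)‖ - ‖ψ 0 - φ d₀‖ := by
              rw [← ht]; linarith
          _ ≤ ‖u b₁ - u 0‖ := by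
              rw [hdecomp]
              have h8 := norm_sub_norm_le ((ζ b₁ - 1) * φ d₀) (-(ζ b₁ * (ψ b₁ - φ d₀)))
              rw [sub_neg_eq_add, norm_neg] at h8
              have h9 := norm_sub_norm_le ((ζ b₁ - 1) * φ d₀ + ζ b₁ * (ψ b₁ - φ d₀))
                (ψ 0 - φ d₀)
              linarith
      have : ‖∑ b, (Q a b : ℂ) * u b‖ ≤ 1 - q * (δ₀ / 4) ^ 2 / 4 :=
        sep_bound Q hQ0 hQrow hq hq0 u hub (by positivity) (by linarith) hsep hb₁0 a
      calc ‖∑ b, (Q a b : ℂ) * (ζ b * ψ b)‖ = ‖∑ b, (Q a b : ℂ) * u b‖ := rfl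
        _ ≤ 1 - q * (δ₀ / 4) ^ 2 / 4 := this
        _ ≤ 1 - q * δ₀ ^ 2 / 256 := by nlinarith

lemma key_contract_scaled (Q : A → A → ℝ) (hQ0 : ∀ a b, 0 ≤ Q a b)
    (hQrow : ∀ a, ∑ b, Q a b = 1)
    {q : ℝ} (hq : ∀ a b, q ≤ Q a b) (hq0 : 0 ≤ q) (hq1 : q ≤ 1)
    {δ₀ : ℝ} (hδ₀0 : 0 < δ₀) (hδ₀2 : δ₀ ≤ 2)
    (ζ : AddChar A ℂ) (hζ : ∃ b, δ₀ ≤ ‖ζ b - 1‖)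
    {r : ℝ} (hr : 0 ≤ r) (φ : A → ℂ) (hφ : ∀ d, ‖φ d‖ ≤ r) (a : A) :
    ‖∑ b, (Q a b : ℂ) * (ζ b * ∑ d, (Q b d : ℂ) * φ d)‖
      ≤ (1 - q * δ₀ ^ 2 / 256) * r := by
  rcases hr.eq_or_lt with h0 | h0
  · have hφ0 : ∀ d, φ d = 0 := fun d =>
      norm_le_zero_iff.mp (by rw [h0]; exact hφ d)
    simp [hφ0, ← h0]
  · set φ' : A → ℂ := fun d => (r : ℂ)⁻¹ * φ d with hφ'
    have hrC : (r : ℂ) ≠ 0 := by exact_mod_cast ne_of_gt h0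
    have hφ'1 : ∀ d, ‖φ' d‖ ≤ 1 := by
      intro d
      rw [hφ']
      simp only [norm_mul, norm_inv, Complex.norm_real, Real.norm_of_nonneg hr]
      rw [inv_mul_le_iff₀ h0]
      linarith [hφ d]
    have hkey := key_contract Q hQ0 hQrow hq hq0 hq1 hδ₀0 hδ₀2 ζ hζ φ' hφ'1 a
    have hEq : ∑ b, (Q a b : ℂ) * (ζ b * ∑ d, (Q b d : ℂ) * φ' d)
        = (r : ℂ)⁻¹ * ∑ b, (Q a b : ℂ) * (ζ b * ∑ d, (Q b d : ℂ) * φ d) := by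
      rw [Finset.mul_sum]
      refine Finset.sum_congr rfl fun b _ => ?_
      simp only [hφ', Finset.mul_sum]
      exact Finset.sum_congr rfl fun d _ => by ring
    rw [hEq, norm_mul, norm_inv, Complex.norm_real, Real.norm_of_nonneg hr] at hkey
    set X := ∑ b, (Q a b : ℂ) * (ζ b * ∑ d, (Q b d : ℂ) * φ d)
    calc ‖X‖ = r * (r⁻¹ * ‖X‖) := by field_simp
      _ ≤ r * (1 - q * δ₀ ^ 2 / 256) := mul_le_mul_of_nonneg_left hkey hr
      _ = (1 - q * δ₀ ^ 2 / 256) * r := mul_comm _ _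

/-- The iterated transfer-operator vector associated to a string of characters. -/
noncomputable def Uvec (Q : A → A → ℝ) : ℕ → (ℕ → AddChar A ℂ) → A → ℂ
  | 0, _, _ => 1
  | n + 1, c, a => ∑ b, (Q a b : ℂ) * (c 0 b * Uvec Q n (fun i => c (i + 1)) b)

/-- Number of nontrivial characters among the first `n`. -/
noncomputable def countN (n : ℕ) (c : ℕ → AddChar A ℂ) : ℕ :=
  ((Finset.range n).filter fun i => c i ≠ 1).card

lemma countN_succ (n : ℕ) (c : ℕ → AddChar A ℂ) :
    countN (n + 1) c = (if c 0 ≠ 1 then 1 else 0) + countN n (fun i => c (i + 1)) := by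
  classical
  unfold countN
  rw [Finset.card_filter, Finset.card_filter, Finset.sum_range_succ']
  rw [add_comm]

lemma Uvec_one (Q : A → A → ℝ) (hQrow : ∀ a, ∑ b, Q a b = 1) :
    ∀ n (a : A), Uvec Q n (fun _ => 1) a = 1 := by
  intro n
  induction n with
  | zero => intro a; rfl
  | succ m ih =>
    intro a
    show (∑ b, (Q a b : ℂ) * ((1 : AddChar A ℂ) b * Uvec Q m (fun _ => 1) b)) = 1
    simp only [AddChar.one_apply, one_mul, ih, mul_one]
    exact_mod_cast hQrow a

lemma Uvec_norm (Q : A → A → ℝ) (hQ0 : ∀ a b, 0 ≤ Q a b) (hQrow : ∀ a, ∑ b, Q a b = 1)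
    {q : ℝ} (hq : ∀ a b, q ≤ Q a b) (hq0 : 0 ≤ q) (hq1 : q ≤ 1)
    {δ₀ : ℝ} (hδ₀0 : 0 < δ₀) (hδ₀2 : δ₀ ≤ 2)
    (hδ : ∀ ζ : AddChar A ℂ, ζ ≠ 1 → ∃ b, δ₀ ≤ ‖ζ b - 1‖) :
    ∀ n (c : ℕ → AddChar A ℂ) (a : A),
      ‖Uvec Q n c a‖ ≤ (1 - q * δ₀ ^ 2 / 256) ^ (countN n c / 2) := by
  classical
  set ρ : ℝ := 1 - q * δ₀ ^ 2 / 256 with hρ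
  have h4 : q * δ₀ ^ 2 ≤ 4 := by nlinarith
  have h5 : 0 ≤ q * δ₀ ^ 2 := by positivity
  have hρ0 : 0 ≤ ρ := by rw [hρ]; linarith
  have hρ1 : ρ ≤ 1 := by rw [hρ]; linarith
  have hmono : ∀ {m n' : ℕ}, m ≤ n' → ρ ^ n' ≤ ρ ^ m := fun h =>
    pow_le_pow_of_le_one hρ0 hρ1 h
  intro n
  induction n using Nat.strong_induction_on with
  | _ n ih =>
    match n with
    | 0 =>
      intro c a
      simp [Uvec, countN]
    | 1 =>
      intro c a
      have h1 : ‖Uvec Q 1 c a‖ ≤ 1 := by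
        show ‖∑ b, (Q a b : ℂ) * (c 0 b * Uvec Q 0 (fun i => c (i + 1)) b)‖ ≤ 1
        refine conv_bound Q hQ0 hQrow _ (fun b => ?_) a
        show ‖c 0 b * (1 : ℂ)‖ ≤ 1
        rw [mul_one, AddChar.norm_apply]
      have h2 : countN 1 c / 2 = 0 := by
        have : countN 1 c ≤ 1 := by
          unfold countN
          exact (Finset.card_filter_le _ _).trans (by simp)
        omega
      rw [h2, pow_zero]
      exact h1
    | (m + 2) =>
      intro c a
      set c' : ℕ → AddChar A ℂ := fun i => c (i + 1) with hc'
      set c'' : ℕ → AddChar A ℂ := fun i => c' (i + 1) with hc''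
      set φ : A → ℂ := fun d => c' 0 d * Uvec Q m c'' d with hφdef
      have hφb : ∀ d, ‖φ d‖ ≤ ρ ^ (countN m c'' / 2) := by
        intro d
        rw [hφdef]
        show ‖c' 0 d * Uvec Q m c'' d‖ ≤ _
        rw [norm_mul, AddChar.norm_apply, one_mul]
        exact ih m (by omega) c'' d
      have hUm1 : ∀ b, Uvec Q (m + 1) c' b = ∑ d, (Q b d : ℂ) * φ d := fun b => rfl
      have hshape : Uvec Q (m + 2) c a
          = ∑ b, (Q a b : ℂ) * (c 0 b * ∑ d, (Q b d : ℂ) * φ d) := by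
        show (∑ b, (Q a b : ℂ) * (c 0 b * Uvec Q (m + 1) c' b)) = _
        exact Finset.sum_congr rfl fun b _ => by rw [hUm1 b]
      by_cases h0 : c 0 = 1
      · have hbound : ‖Uvec Q (m + 2) c a‖ ≤ ρ ^ (countN (m + 1) c' / 2) := by
          show ‖∑ b, (Q a b : ℂ) * (c 0 b * Uvec Q (m + 1) c' b)‖ ≤ _
          refine conv_bound Q hQ0 hQrow _ (fun b => ?_) a
          rw [norm_mul, AddChar.norm_apply, one_mul]
          exact ih (m + 1) (by omega) c' b
        have hcount : countN (m + 2) c = countN (m + 1) c' := by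
          rw [countN_succ, if_neg (by simpa using h0), zero_add]
        rw [hcount]
        exact hbound
      · have hr0 : (0 : ℝ) ≤ ρ ^ (countN m c'' / 2) := pow_nonneg hρ0 _
        have hkey := key_contract_scaled Q hQ0 hQrow hq hq0 hq1 hδ₀0 hδ₀2 (c 0)
          (hδ (c 0) h0) hr0 φ hφb a
        rw [← hshape] at hkey
        have hcount : countN (m + 2) c ≤ countN m c'' + 2 := by
          have hcc : (fun i => c (i + 1 + 1)) = c'' := rfl
          rw [countN_succ, countN_succ, hcc]
          have h1 : (if c 0 ≠ 1 then 1 else 0) ≤ 1 := by split <;> omega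
          have h2 : (if c (0 + 1) ≠ 1 then 1 else 0) ≤ 1 := by split <;> omega
          omega
        calc ‖Uvec Q (m + 2) c a‖ ≤ ρ * ρ ^ (countN m c'' / 2) := hkey
          _ = ρ ^ (countN m c'' / 2 + 1) := by rw [pow_succ]; ring
          _ ≤ ρ ^ (countN (m + 2) c / 2) := hmono (by omega)

lemma sum_paths (Q : A → A → ℝ) :
    ∀ (n : ℕ) (c : ℕ → AddChar A ℂ) (w : A → ℝ),
    ∑ v : Fin (n + 1) → A,
      ((w (v 0) : ℂ) * ∏ i : Fin n, (Q (v i.castSucc) (v i.succ) : ℂ))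
        * ∏ i : Fin (n + 1), c i (v i)
      = ∑ a, (w a : ℂ) * (c 0 a * Uvec Q n (fun i => c (i + 1)) a) := by
  intro n
  induction n with
  | zero =>
    intro c w
    refine Fintype.sum_equiv (Equiv.funUnique (Fin 1) A) _ _ fun v => ?_
    simp [Uvec, Equiv.funUnique]
  | succ m ih =>
    intro c w
    set F : (Fin (m + 1 + 1) → A) → ℂ := fun v =>
      ((w (v 0) : ℂ) * ∏ i : Fin (m + 1), (Q (v i.castSucc) (v i.succ) : ℂ))
        * ∏ i : Fin (m + 1 + 1), c i (v i) with hF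
    have hstep : ∀ (a : A) (v : Fin (m + 1) → A),
        F (Fin.cons a v)
        = c 0 a * ((((w a * Q a (v 0) : ℝ) : ℂ)
            * ∏ i : Fin m, (Q (v i.castSucc) (v i.succ) : ℂ))
          * ∏ i : Fin (m + 1), c (i + 1) (v i)) := by
      intro a v
      simp only [hF]
      rw [Fin.prod_univ_succ (fun i : Fin (m + 1) =>
        (Q ((Fin.cons a v : Fin (m + 1 + 1) → A) i.castSucc)
          ((Fin.cons a v : Fin (m + 1 + 1) → A) i.succ) : ℂ))]
      rw [Fin.prod_univ_succ (fun i : Fin (m + 1 + 1) =>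
        c i ((Fin.cons a v : Fin (m + 1 + 1) → A) i))]
      simp only [Fin.cons_zero, Fin.cons_succ, Fin.castSucc_zero, ← Fin.succ_castSucc,
        Fin.val_succ, Fin.val_zero]
      push_cast
      ring
    calc ∑ v, F v
        = ∑ p : A × (Fin (m + 1) → A), F (Fin.cons p.1 p.2) :=
          (Fintype.sum_equiv (Fin.consEquiv (fun _ : Fin (m + 1 + 1) => A))
            (fun p => F (Fin.cons p.1 p.2)) F (fun p => rfl)).symm
      _ = ∑ a : A, ∑ v : Fin (m + 1) → A, F (Fin.cons a v) := Fintype.sum_prod_type _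
      _ = ∑ a : A, ∑ v : Fin (m + 1) → A, c 0 a * ((((w a * Q a (v 0) : ℝ) : ℂ)
            * ∏ i : Fin m, (Q (v i.castSucc) (v i.succ) : ℂ))
          * ∏ i : Fin (m + 1), c (i + 1) (v i)) :=
          Finset.sum_congr rfl fun a _ => Finset.sum_congr rfl fun v _ => hstep a v
      _ = ∑ a : A, c 0 a * ∑ b, ((w a * Q a b : ℝ) : ℂ)
            * (c (0 + 1) b * Uvec Q m (fun i => c (i + 1 + 1)) b) := by
          refine Finset.sum_congr rfl fun a _ => ?_
          rw [← Finset.mul_sum]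
          congr 1
          exact ih (fun i => c (i + 1)) (fun b => w a * Q a b)
      _ = ∑ a, (w a : ℂ) * (c 0 a * Uvec Q (m + 1) (fun i => c (i + 1)) a) := by
          refine Finset.sum_congr rfl fun a _ => ?_
          show _ = (w a : ℂ) * (c 0 a
            * ∑ b, (Q a b : ℂ) * (c (0 + 1) b * Uvec Q m (fun i => c (i + 1 + 1)) b))
          rw [Finset.mul_sum, Finset.mul_sum, Finset.mul_sum]
          refine Finset.sum_congr rfl fun b _ => ?_
          push_cast
          ring

end AuxiliaryLemmas

open scoped ENNReal in
open Finset in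
/-- A stationary Markov measure on `A^ℤ` whose transition matrix has all entries
strictly positive is harmonically mixing: for every `ε > 0` there is `K` such
that every character of rank `> 2K` has Fourier coefficient of modulus `< ε`. -/
theorem markov_harmonically_mixing (A : Type*) [AddCommGroup A] [Fintype A]
    [MeasurableSpace A]
    (Q : A → A → ℝ) (hQpos : ∀ a b, 0 < Q a b) (hQrow : ∀ a, ∑ b, Q a b = 1)
    (ν : A → ℝ) (hν0 : ∀ a, 0 ≤ ν a) (hν1 : ∑ a, ν a = 1)
    (hstat : ∀ b, ∑ a, ν a * Q a b = ν b)
    (μ : Measure (ℤ → A)) [IsProbabilityMeasure μ]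
    (hμ : ∀ (k : ℤ) (n : ℕ) (f : ℕ → A),
      μ {x | ∀ i : ℕ, i ≤ n → x (k + i) = f i}
        = ENNReal.ofReal (ν (f 0) * ∏ i ∈ Finset.range n, Q (f i) (f (i + 1)))) :
    ∀ ε > 0, ∃ K : ℕ, ∀ χ : ℤ → AddChar A ℂ, {i | χ i ≠ 1}.Finite →
      2 * K < {i | χ i ≠ 1}.ncard → ‖∫ x, charEval χ x ∂μ‖ < ε := by
  classical
  intro ε hε
  haveI hAne : Nonempty A := ⟨0⟩
  by_cases hNT : ∃ ζ : AddChar A ℂ, ζ ≠ 1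
  swap
  · refine ⟨0, fun χ hfin hrank => ?_⟩
    push_neg at hNT
    have hS : {i | χ i ≠ 1} = ∅ := by
      ext i; simp [hNT (χ i)]
    rw [hS, Set.ncard_empty] at hrank
    omega
  -- the minimal transition probability
  have hQ0 : ∀ a b, 0 ≤ Q a b := fun a b => (hQpos a b).le
  set q : ℝ := Finset.univ.inf' Finset.univ_nonempty (fun p : A × A => Q p.1 p.2) with hqdef
  have hq : ∀ a b, q ≤ Q a b := fun a b => Finset.inf'_le _ (Finset.mem_univ (a, b))
  have hq0 : 0 < q := by
    obtain ⟨p, -, hp⟩ := Finset.exists_mem_eq_inf' Finset.univ_nonempty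
      (fun p : A × A => Q p.1 p.2)
    rw [hqdef, hp]; exact hQpos _ _
  have hq1 : q ≤ 1 := by
    have h1 : Q 0 0 ≤ ∑ b, Q 0 b :=
      Finset.single_le_sum (fun b _ => hQ0 0 b) (Finset.mem_univ 0)
    rw [hQrow 0] at h1
    exact (hq 0 0).trans h1
  -- the minimal character separation
  set NT : Finset (AddChar A ℂ) := Finset.univ.filter (fun ζ => ζ ≠ 1) with hNTdef
  have hNTne : NT.Nonempty := by
    obtain ⟨ζ, hζ⟩ := hNT; exact ⟨ζ, by simp [hNTdef, hζ]⟩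
  set δ₀ : ℝ := NT.inf' hNTne
    (fun ζ => Finset.univ.sup' Finset.univ_nonempty (fun b => ‖ζ b - 1‖)) with hδdef
  have hδwit : ∀ ζ : AddChar A ℂ, ζ ≠ 1 → ∃ b, δ₀ ≤ ‖ζ b - 1‖ := by
    intro ζ hζ
    obtain ⟨b, -, hb⟩ := Finset.exists_mem_eq_sup' (Finset.univ_nonempty (α := A))
      (fun b => ‖ζ b - 1‖)
    refine ⟨b, ?_⟩
    rw [← hb]
    exact Finset.inf'_le _ (by simp [hNTdef, hζ])
  have hδ0 : 0 < δ₀ := by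
    rw [hδdef, Finset.lt_inf'_iff]
    intro ζ hζ
    rw [Finset.lt_sup'_iff]
    have hζ1 : ζ ≠ 1 := by simpa [hNTdef] using hζ
    obtain ⟨b, hb⟩ : ∃ b, ζ b ≠ 1 := by
      by_contra h
      push_neg at h
      exact hζ1 (DFunLike.ext _ _ fun b => (h b).trans (AddChar.one_apply b).symm)
    refine ⟨b, Finset.mem_univ b, ?_⟩
    have : ζ b - 1 ≠ 0 := sub_ne_zero.2 hb
    simpa [norm_pos_iff] using this
  have hδ2 : δ₀ ≤ 2 := by
    obtain ⟨ζ, hζmem⟩ := hNTne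
    have h1 := Finset.inf'_le
      (fun ζ : AddChar A ℂ => Finset.univ.sup' Finset.univ_nonempty fun b => ‖ζ b - 1‖) hζmem
    rw [← hδdef] at h1
    refine h1.trans ?_
    rw [Finset.sup'_le_iff]
    intro b _
    calc ‖ζ b - 1‖ ≤ ‖ζ b‖ + ‖(1 : ℂ)‖ := norm_sub_le _ _
      _ = 2 := by rw [AddChar.norm_apply]; norm_num
  set ρ : ℝ := 1 - q * δ₀ ^ 2 / 256 with hρdef
  have h4 : q * δ₀ ^ 2 ≤ 4 := by nlinarith
  have h5 : 0 < q * δ₀ ^ 2 := by positivity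
  have hρ0 : 0 ≤ ρ := by rw [hρdef]; linarith
  have hρ1 : ρ < 1 := by rw [hρdef]; linarith
  obtain ⟨K, hK⟩ := exists_pow_lt_of_lt_one hε hρ1
  refine ⟨K, fun χ hfin hrank => ?_⟩
  -- the support window
  set F : Finset ℤ := hfin.toFinset with hFdef
  have hFne : F.Nonempty := by
    rw [hFdef, Set.Finite.toFinset_nonempty]
    exact Set.nonempty_of_ncard_ne_zero (by omega)
  set k : ℤ := F.min' hFne with hkdef
  set M : ℤ := F.max' hFne with hMdef
  have hkM : k ≤ M := F.min'_le M (F.max'_mem hFne)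
  set n : ℕ := (M - k).toNat with hndef
  have hn : (n : ℤ) = M - k := Int.toNat_of_nonneg (by omega)
  have hmemF : ∀ j, j ∈ F ↔ χ j ≠ 1 := fun j => hfin.mem_toFinset
  have hFsub : ∀ j ∈ F, k ≤ j ∧ j ≤ k + n := by
    intro j hj
    have h1 := F.min'_le j hj
    have h2 := F.le_max' j hj
    omega
  -- cylinders
  set E : (Fin (n + 1) → A) → Set (ℤ → A) :=
    fun v => {x | ∀ i : Fin (n + 1), x (k + (i : ℕ)) = v i} with hEdef
  set wt : (Fin (n + 1) → A) → ℝ :=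
    fun v => ν (v 0) * ∏ i : Fin n, Q (v i.castSucc) (v i.succ) with hwtdef
  have hwt0 : ∀ v, 0 ≤ wt v := fun v =>
    mul_nonneg (hν0 _) (Finset.prod_nonneg fun i _ => hQ0 _ _)
  have hμE : ∀ v, μ (E v) = ENNReal.ofReal (wt v) := by
    intro v
    set f : ℕ → A := fun i => if h : i < n + 1 then v ⟨i, h⟩ else v 0 with hfdef
    have hEeq : E v = {x | ∀ i : ℕ, i ≤ n → x (k + i) = f i} := by
      ext x
      constructor
      · intro hx i hi
        have hlt : i < n + 1 := by omega
        have h2 := hx ⟨i, hlt⟩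
        simpa [hfdef, dif_pos hlt, hi] using h2
      · intro hx i
        have h2 := hx i (by omega : (i : ℕ) ≤ n)
        simpa [hfdef, dif_pos i.isLt, Nat.lt_succ_iff.mp i.isLt] using h2
    rw [hEeq, hμ k n f]
    congr 1
    have hf0 : f 0 = v 0 := by
      simp only [hfdef, dif_pos (by omega : (0 : ℕ) < n + 1)]
      congr 1
      try exact Fin.ext (by simp)
    have hprodeq : ∏ i ∈ Finset.range n, Q (f i) (f (i + 1))
        = ∏ i : Fin n, Q (v i.castSucc) (v i.succ) := by
      rw [← Fin.prod_univ_eq_prod_range (fun i => Q (f i) (f (i + 1))) n]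
      refine Finset.prod_congr rfl fun i _ => ?_
      have h1 : (i : ℕ) < n + 1 := by omega
      have h2 : (i : ℕ) + 1 < n + 1 := by omega
      have hf1 : f (i : ℕ) = v i.castSucc := by
        simp only [hfdef, dif_pos h1]
        congr 1
      have hf2 : f ((i : ℕ) + 1) = v i.succ := by
        simp only [hfdef, dif_pos h2]
        congr 1
      rw [hf1, hf2]
    rw [hf0, hprodeq, hwtdef]
  -- total mass of cylinders
  have hwtsum : ∑ v, wt v = 1 := by
    have h := sum_paths Q n (fun _ => (1 : AddChar A ℂ)) ν
    simp only [AddChar.one_apply, Finset.prod_const_one, mul_one, one_mul,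
      Uvec_one Q hQrow] at h
    have h2 : (((∑ v, wt v : ℝ)) : ℂ) = ((1 : ℝ) : ℂ) := by
      rw [hwtdef]
      push_cast
      rw [h]
      norm_cast
    exact_mod_cast h2
  -- every point lies in its own cylinder
  have huniv : ∀ x : ℤ → A, x ∈ E (fun i => x (k + (i : ℕ))) := fun x i => rfl
  -- measurable hulls
  set G : (Fin (n + 1) → A) → Set (ℤ → A) := fun v => toMeasurable μ (E v) with hGdef
  have hG : ∀ v, MeasurableSet (G v) := fun v => measurableSet_toMeasurable μ (E v)
  have hEsubG : ∀ v, E v ⊆ G v := fun v => subset_toMeasurable μ (E v)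
  have hμG : ∀ v, μ (G v) = μ (E v) := fun v => measure_toMeasurable (E v)
  have hsum1 : ∑ v, μ (G v) = 1 := by
    calc ∑ v, μ (G v) = ∑ v, ENNReal.ofReal (wt v) := by
          refine Finset.sum_congr rfl fun v _ => ?_
          rw [hμG v, hμE v]
      _ = ENNReal.ofReal (∑ v, wt v) :=
          (ENNReal.ofReal_sum_of_nonneg fun v _ => hwt0 v).symm
      _ = 1 := by rw [hwtsum, ENNReal.ofReal_one]
  -- hull overlaps are null
  have hGG : ∀ v w, v ≠ w → μ (G v ∩ G w) = 0 := by
    intro v w hvw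
    set R : Finset (Fin (n + 1) → A) := (Finset.univ.erase v).erase w with hRdef
    have hcov : (Set.univ : Set (ℤ → A)) ⊆ (G v ∪ G w) ∪ ⋃ u ∈ R, G u := by
      intro x _
      set u : Fin (n + 1) → A := fun i => x (k + (i : ℕ)) with hudef
      have hx : x ∈ G u := hEsubG u (huniv x)
      by_cases h1 : u = v
      · exact Or.inl (Or.inl (h1 ▸ hx))
      by_cases h2 : u = w
      · exact Or.inl (Or.inr (h2 ▸ hx))
      · refine Or.inr (Set.mem_biUnion ?_ hx)
        rw [hRdef]
        exact Finset.mem_erase.2 ⟨h2, Finset.mem_erase.2 ⟨h1, Finset.mem_univ u⟩⟩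
    have h1le : (1 : ℝ≥0∞) ≤ μ (G v ∪ G w) + ∑ u ∈ R, μ (G u) := by
      calc (1 : ℝ≥0∞) = μ Set.univ := measure_univ.symm
        _ ≤ μ ((G v ∪ G w) ∪ ⋃ u ∈ R, G u) := measure_mono hcov
        _ ≤ μ (G v ∪ G w) + μ (⋃ u ∈ R, G u) := measure_union_le _ _
        _ ≤ μ (G v ∪ G w) + ∑ u ∈ R, μ (G u) :=
            add_le_add le_rfl (measure_biUnion_finset_le R G)
    have hsplit : μ (G v) + (μ (G w) + ∑ u ∈ R, μ (G u)) = 1 := by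
      rw [← hsum1]
      rw [← Finset.add_sum_erase _ _ (Finset.mem_univ v)]
      congr 1
      rw [← Finset.add_sum_erase _ _ (Finset.mem_erase.2 ⟨hvw.symm, Finset.mem_univ w⟩)]
    have hkey : μ (G v ∩ G w) + (μ (G v ∪ G w) + ∑ u ∈ R, μ (G u)) = 1 := by
      have hm := measure_union_add_inter (μ := μ) (G v) (hG w)
      calc μ (G v ∩ G w) + (μ (G v ∪ G w) + ∑ u ∈ R, μ (G u))
          = (μ (G v ∪ G w) + μ (G v ∩ G w)) + ∑ u ∈ R, μ (G u) := by ring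
        _ = (μ (G v) + μ (G w)) + ∑ u ∈ R, μ (G u) := by rw [hm]
        _ = μ (G v) + (μ (G w) + ∑ u ∈ R, μ (G u)) := by ring
        _ = 1 := hsplit
    have h2 : μ (G v ∩ G w) + 1 ≤ 1 := by
      calc μ (G v ∩ G w) + 1
          ≤ μ (G v ∩ G w) + (μ (G v ∪ G w) + ∑ u ∈ R, μ (G u)) := add_le_add le_rfl h1le
        _ = 1 := hkey
    have h3 : μ (G v ∩ G w) + 1 ≤ 0 + 1 := by simpa using h2
    have h4 := ENNReal.le_of_add_le_add_right (by norm_num : (1 : ℝ≥0∞) ≠ ⊤) h3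
    exact le_antisymm h4 (zero_le)
  -- disjointified measurable versions
  set D : (Fin (n + 1) → A) → Set (ℤ → A) :=
    fun v => G v \ ⋃ w, ⋃ _ : w ≠ v, G w with hDdef
  have hD : ∀ v, MeasurableSet (D v) := fun v =>
    (hG v).diff (MeasurableSet.iUnion fun w => MeasurableSet.iUnion fun _ => hG w)
  have hGD : ∀ v, μ (G v \ D v) = 0 := by
    intro v
    have hsub : G v \ D v ⊆ ⋃ w, ⋃ _ : w ≠ v, (G v ∩ G w) := by
      rintro x ⟨hx1, hx2⟩
      have hxU : x ∈ ⋃ w, ⋃ _ : w ≠ v, G w := by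
        by_contra h
        exact hx2 ⟨hx1, h⟩
      simp only [Set.mem_iUnion] at hxU
      obtain ⟨w, hwv, hxw⟩ := hxU
      exact Set.mem_iUnion.2 ⟨w, Set.mem_iUnion.2 ⟨hwv, ⟨hx1, hxw⟩⟩⟩
    exact measure_mono_null hsub
      (measure_iUnion_null fun w => measure_iUnion_null fun hwv => hGG v w hwv.symm)
  have hDsubE : ∀ v, D v ⊆ E v := by
    intro v x hx
    obtain ⟨hxG, hxU⟩ := hx
    have hxe : x ∈ E (fun i => x (k + (i : ℕ))) := huniv x
    by_cases h : (fun i : Fin (n + 1) => x (k + (i : ℕ))) = v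
    · exact h ▸ hxe
    · exact absurd (Set.mem_iUnion.2 ⟨fun i : Fin (n + 1) => x (k + (i : ℕ)),
        Set.mem_iUnion.2 ⟨h, hEsubG _ hxe⟩⟩) hxU
  have hμD : ∀ v, μ (D v) = ENNReal.ofReal (wt v) := by
    intro v
    have le1 : μ (D v) ≤ μ (E v) := measure_mono (hDsubE v)
    have le2 : μ (G v) ≤ μ (D v) := by
      have hcup : G v = D v ∪ (G v \ D v) :=
        (Set.union_diff_cancel (Set.diff_subset)).symm
      calc μ (G v) = μ (D v ∪ (G v \ D v)) := by rw [← hcup]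
        _ ≤ μ (D v) + μ (G v \ D v) := measure_union_le _ _
        _ = μ (D v) := by rw [hGD v, add_zero]
    have le3 : μ (E v) ≤ μ (G v) := measure_mono (hEsubG v)
    have : μ (D v) = μ (E v) := le_antisymm le1 (le3.trans le2)
    rw [this, hμE v]
  -- the character value on each cylinder
  set W : (Fin (n + 1) → A) → ℂ :=
    fun v => ∏ i : Fin (n + 1), (χ (k + (i : ℕ))) (v i) with hWdef
  have hcharE : ∀ v, ∀ x ∈ E v, charEval χ x = W v := by
    intro v x hx
    have hsupp : Function.mulSupport (fun j : ℤ => (χ j) (x j))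
        ⊆ ↑(Finset.image (fun i : Fin (n + 1) => k + ((i : ℕ) : ℤ)) Finset.univ) := by
      intro j hj
      have hχj : χ j ≠ 1 := by
        intro h
        apply hj
        show (χ j) (x j) = 1
        rw [h]
        exact AddChar.one_apply _
      have hjF : j ∈ F := (hmemF j).2 hχj
      obtain ⟨hj1, hj2⟩ := hFsub j hjF
      have htn : ((j - k).toNat : ℤ) = j - k := Int.toNat_of_nonneg (by omega)
      have hlt : (j - k).toNat < n + 1 := by omega
      refine Finset.mem_coe.2 (Finset.mem_image.2 ⟨⟨(j - k).toNat, hlt⟩, Finset.mem_univ _, ?_⟩)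
      show k + (((j - k).toNat : ℕ) : ℤ) = j
      omega
    rw [charEval, finprod_eq_prod_of_mulSupport_subset _ hsupp,
      Finset.prod_image (fun i1 _ i2 _ h => by
        have h2 : ((i1 : ℕ) : ℤ) = ((i2 : ℕ) : ℤ) := by omega
        exact Fin.ext (by exact_mod_cast h2))]
    exact Finset.prod_congr rfl fun i _ => by rw [hx i]
  -- the simple approximation
  set g : (ℤ → A) → ℂ := fun x => ∑ v, (D v).indicator (fun _ => W v) x with hgdef
  have hae : (fun x => charEval χ x) =ᵐ[μ] g := by
    rw [Filter.EventuallyEq, ae_iff]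
    refine measure_mono_null ?_ (measure_iUnion_null fun v => hGD v)
    intro x hx
    by_contra hc
    simp only [Set.mem_iUnion] at hc
    push_neg at hc
    set u : Fin (n + 1) → A := fun i => x (k + (i : ℕ)) with hudef
    have hxG : x ∈ G u := hEsubG u (huniv x)
    have hxD : x ∈ D u := by
      by_contra h
      exact hc u ⟨hxG, h⟩
    apply hx
    show charEval χ x = g x
    have h1 : charEval χ x = W u := hcharE u x (huniv x)
    have h2 : g x = W u := by
      simp only [hgdef]
      have hz : ∀ w, w ∈ (Finset.univ : Finset (Fin (n + 1) → A)) → w ≠ u →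
          (D w).indicator (fun _ => W w) x = 0 := by
        intro w _ hwu
        refine Set.indicator_of_notMem (fun hxDw => ?_) _
        have hxEw := hDsubE w hxDw
        exact hwu (funext fun i => (hxEw i).symm)
      rw [Finset.sum_eq_single u hz (fun h => absurd (Finset.mem_univ u) h)]
      exact Set.indicator_of_mem hxD _
    rw [h1, h2]
  have hintD : ∫ x, charEval χ x ∂μ = ∑ v, (wt v) • W v := by
    rw [integral_congr_ae hae]
    simp only [hgdef]
    rw [integral_finset_sum _ (fun v _ => (integrable_const (W v)).indicator (hD v))]
    refine Finset.sum_congr rfl fun v _ => ?_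
    rw [integral_indicator_const _ (hD v), measureReal_def, hμD v, ENNReal.toReal_ofReal (hwt0 v)]
  -- rewrite the integral via the transfer operator
  set c : ℕ → AddChar A ℂ := fun i => χ (k + (i : ℕ)) with hcdef
  have hint2 : ∫ x, charEval χ x ∂μ
      = ∑ a, ((ν a : ℝ) : ℂ) * (c 0 a * Uvec Q n (fun i => c (i + 1)) a) := by
    rw [hintD, ← sum_paths Q n c ν]
    refine Finset.sum_congr rfl fun v _ => ?_
    simp only [hwtdef, hWdef, hcdef]
    push_cast
    rw [Complex.real_smul]
    push_cast
    ring
  -- norm bound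
  have hUb := Uvec_norm Q hQ0 hQrow hq hq0.le hq1 hδ0 hδ2 hδwit n (fun i => c (i + 1))
  rw [← hρdef] at hUb
  set e : ℕ := countN n (fun i => c (i + 1)) / 2 with hedef
  have hbound : ‖∫ x, charEval χ x ∂μ‖ ≤ ρ ^ e := by
    rw [hint2]
    calc ‖∑ a, ((ν a : ℝ) : ℂ) * (c 0 a * Uvec Q n (fun i => c (i + 1)) a)‖
        ≤ ∑ a, ‖((ν a : ℝ) : ℂ) * (c 0 a * Uvec Q n (fun i => c (i + 1)) a)‖ :=
          norm_sum_le _ _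
      _ ≤ ∑ a, ν a * ρ ^ e := by
          refine Finset.sum_le_sum fun a _ => ?_
          rw [norm_mul, norm_mul, AddChar.norm_apply, one_mul, Complex.norm_real,
            Real.norm_of_nonneg (hν0 a)]
          exact mul_le_mul_of_nonneg_left (hUb a) (hν0 a)
      _ = ρ ^ e := by rw [← Finset.sum_mul, hν1, one_mul]
  -- counting nontrivial characters
  have hkmem : k ∈ F := F.min'_mem hFne
  have hcount : 2 * K ≤ countN n (fun i => c (i + 1)) := by
    have hcard : (F.erase k).card ≤ countN n (fun i => c (i + 1)) := by
      show (F.erase k).card ≤ ((Finset.range n).filter fun i => c (i + 1) ≠ 1).card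
      refine Finset.card_le_card_of_injOn (fun j => (j - (k + 1)).toNat) ?_ ?_
      · intro j hj
        obtain ⟨hjne, hjF⟩ := Finset.mem_erase.1 hj
        obtain ⟨hj1, hj2⟩ := hFsub j hjF
        show (j - (k + 1)).toNat ∈ (Finset.range n).filter fun i => c (i + 1) ≠ 1
        rw [Finset.mem_filter, Finset.mem_range]
        refine ⟨by omega, ?_⟩
        have heq : c ((j - (k + 1)).toNat + 1) = χ j := by
          simp only [hcdef]
          congr 1
          push_cast
          omega
        rw [heq]
        exact (hmemF j).1 hjF
      · intro j1 h1 j2 h2 heq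
        have heq2 : (j1 - (k + 1)).toNat = (j2 - (k + 1)).toNat := heq
        rw [Finset.mem_coe, Finset.mem_erase] at h1 h2
        obtain ⟨hne1, hF1⟩ := h1
        obtain ⟨hne2, hF2⟩ := h2
        obtain ⟨ha1, -⟩ := hFsub j1 hF1
        obtain ⟨ha2, -⟩ := hFsub j2 hF2
        omega
    have hncard : {i | χ i ≠ 1}.ncard = F.card := by
      rw [hFdef]
      exact Set.ncard_eq_toFinset_card _ hfin
    have hFcard : (F.erase k).card = F.card - 1 := Finset.card_erase_of_mem hkmem
    omega
  calc ‖∫ x, charEval χ x ∂μ‖ ≤ ρ ^ e := hbound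
    _ ≤ ρ ^ K := pow_le_pow_of_le_one hρ0 hρ1.le (by omega)
    _ < ε := hK
end

section
/- Let A be a finite abelian group and α a stationary N-step Markov measure on A^ℤ whose transition probabilities q^a_b (a ∈ A^N, b ∈ A) are all strictly positive. Then α is harmonically mixing. -/
open MeasureTheory

/-- Harmonic mixing of a measure on `A^ℤ`. -/
def HarmonicallyMixing {A : Type*} [AddCommGroup A] [MeasurableSpace A]
    (μ : Measure (ℤ → A)) : Prop :=
  ∀ ε > 0, ∃ R : ℕ, ∀ χ : ℤ → AddChar A ℂ, {i | χ i ≠ 1}.Finite →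
    R < {i | χ i ≠ 1}.ncard → ‖∫ x, charEval χ x ∂μ‖ < ε

set_option linter.unusedSectionVars false

section Discrete
variable {A : Type*} [AddCommGroup A] [Fintype A] [MeasurableSpace A]

/-- The measurable atom of a point. -/
def mAtom (c : A) : Set A := ⋂₀ {T : Set A | MeasurableSet T ∧ c ∈ T}

lemma mAtom_measurable (c : A) : MeasurableSet (mAtom c) :=
  MeasurableSet.sInter (Set.to_countable _) fun _ h => h.1

lemma mem_mAtom_self (c : A) : c ∈ mAtom c := fun _ h => h.2

lemma mem_iff_of_mem_mAtom {c a : A} (ha : a ∈ mAtom c) {T : Set A}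
    (hT : MeasurableSet T) : a ∈ T ↔ c ∈ T := by
  constructor
  · intro haT
    by_contra hcT
    exact (ha Tᶜ ⟨hT.compl, hcT⟩) haT
  · intro hcT
    exact ha T ⟨hT, hcT⟩

theorem discrete_of_markov (N : ℕ) (q : (Fin N → A) → A → ℝ) (hqpos : ∀ a b, 0 < q a b)
    (hqrow : ∀ a, ∑ b, q a b = 1)
    (ν : (Fin N → A) → ℝ) (hν0 : ∀ a, 0 ≤ ν a) (hν1 : ∑ a, ν a = 1)
    (α : Measure (ℤ → A)) [IsProbabilityMeasure α]
    (hα1 : ∀ f : ℕ → A,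
      α {x | ∀ i : ℕ, i < N + 1 → x (-(N : ℤ) + i) = f i}
        = ENNReal.ofReal (ν (fun j : Fin N => f j) * q (fun j : Fin N => f j) (f N))) :
    ∀ s : Set A, MeasurableSet s := by
  classical
  -- the collapsing map of an atom
  set r : A → A → A := fun b a => if a ∈ mAtom b then b else a with hrdef
  have hrT : ∀ (b : A) (T : Set A), MeasurableSet T → r b ⁻¹' T = T := by
    intro b T hT
    ext a
    simp only [Set.mem_preimage, hrdef]
    by_cases ha : a ∈ mAtom b
    · simp only [ha, if_pos]
      exact (mem_iff_of_mem_mAtom ha hT).symm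
    · simp [ha]
  have hrmem : ∀ (b : A) (T : Set A), MeasurableSet T → ∀ a, (r b a ∈ T ↔ a ∈ T) := by
    intro b T hT a
    conv_rhs => rw [← hrT b T hT]
    exact Iff.rfl
  -- saturation of measurable sets in the product
  have hsat : ∀ (b : A) (S : Set (ℤ → A)), MeasurableSet S →
      ∀ x y : ℤ → A, (∀ i, r b (x i) = r b (y i)) → (x ∈ S ↔ y ∈ S) := by
    intro b S hS
    have hpi : (inferInstance : MeasurableSpace (ℤ → A))
        = ⨆ i : ℤ, MeasurableSpace.comap (fun x : ℤ → A => x i) inferInstance := rfl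
    rw [show MeasurableSet S = MeasurableSet[⨆ i : ℤ,
        MeasurableSpace.comap (fun x : ℤ → A => x i) inferInstance] S from by rw [← hpi]] at hS
    rw [MeasurableSpace.measurableSet_iSup] at hS
    induction hS with
    | basic s hs =>
      obtain ⟨i, T, hT, rfl⟩ : ∃ i, ∃ T, MeasurableSet T ∧ (fun x : ℤ → A => x i) ⁻¹' T = s := by
        obtain ⟨i, hi⟩ := hs
        rw [MeasurableSpace.measurableSet_comap] at hi
        exact ⟨i, hi⟩
      intro x y hxy
      simp only [Set.mem_preimage]
      rw [← hrmem b T hT (x i), ← hrmem b T hT (y i), hxy i]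
    | empty => intro x y _; simp
    | compl s _ ih => intro x y hxy; simpa using not_congr (ih x y hxy)
    | iUnion f _ ih =>
      intro x y hxy
      simp only [Set.mem_iUnion]
      exact exists_congr fun n => ih n x y hxy
  -- the one-coordinate cylinder sets
  set D : A → Set (ℤ → A) := fun b => {x | x 0 = b} with hDdef
  set E : A → Set (ℤ → A) := fun b => (fun x : ℤ → A => x 0) ⁻¹' (mAtom b) with hEdef
  have hEmeas : ∀ b, MeasurableSet (E b) := fun b =>
    (mAtom_measurable b).preimage (measurable_pi_apply 0)
  have hDE : ∀ b, α (D b) = α (E b) := by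
    intro b
    refine le_antisymm (measure_mono fun x hx => by
      simp only [hEdef, Set.mem_preimage]; rw [hx]; exact mem_mAtom_self b) ?_
    rw [measure_eq_iInf (D b)]
    refine le_iInf fun t => le_iInf fun hsub => le_iInf fun hmeas => measure_mono ?_
    intro y hy
    set y' : ℤ → A := Function.update y 0 b with hy'def
    have hy' : y' ∈ D b := by simp [hy'def, hDdef]
    have hrb : ∀ i, r b (y' i) = r b (y i) := by
      intro i
      rcases eq_or_ne i 0 with rfl | hi
      · have h1 : y' 0 = b := by simp [hy'def]
        have h2 : y 0 ∈ mAtom b := hy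
        rw [h1, hrdef]
        simp only [if_pos (mem_mAtom_self b), if_pos h2]
      · rw [hy'def, Function.update_of_ne hi]
    exact (hsat b t hmeas y' y hrb).mp (hsub hy')
  -- upper bound on the cylinder measures
  set p : A → ENNReal := fun b => ∑ a : Fin N → A, ENNReal.ofReal (ν a * q a b) with hpdef
  have hDp : ∀ b, α (D b) ≤ p b := by
    intro b
    set fab : (Fin N → A) → ℕ → A := fun a i => if h : i < N then a ⟨i, h⟩ else b with hfab
    have hcov : D b ⊆ ⋃ a : Fin N → A,
        {x : ℤ → A | ∀ i : ℕ, i < N + 1 → x (-(N : ℤ) + i) = fab a i} := by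
      intro x hx
      simp only [Set.mem_iUnion, Set.mem_setOf_eq]
      refine ⟨fun j : Fin N => x (-(N : ℤ) + j), fun i hi => ?_⟩
      by_cases hiN : i < N
      · simp [hfab, hiN]
      · have h0 : -(N : ℤ) + (i : ℕ) = 0 := by omega
        rw [h0]
        have hN : ∀ a' : Fin N → A, fab a' i = b := fun a' => by
          simp only [hfab]; rw [dif_neg hiN]
        exact hx.trans (hN (fun j : Fin N => x (-(N:ℤ) + j))).symm
    calc α (D b) ≤ α (⋃ a : Fin N → A,
          {x : ℤ → A | ∀ i : ℕ, i < N + 1 → x (-(N : ℤ) + i) = fab a i}) := measure_mono hcov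
      _ ≤ ∑' a : Fin N → A, α {x : ℤ → A | ∀ i : ℕ, i < N + 1 → x (-(N : ℤ) + i) = fab a i} :=
          measure_iUnion_le _
      _ = ∑ a : Fin N → A, α {x : ℤ → A | ∀ i : ℕ, i < N + 1 → x (-(N : ℤ) + i) = fab a i} :=
          tsum_fintype _
      _ = p b := by
          refine Finset.sum_congr rfl fun a _ => ?_
          rw [hα1 (fab a)]
          congr 1
          have h1 : (fun j : Fin N => fab a j) = a := by
            funext j
            simp [hfab, j.isLt]
          have h2 : fab a N = b := by simp [hfab]
          rw [h1, h2]
  have hptotal : ∑ b : A, p b = 1 := by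
    rw [hpdef]
    rw [Finset.sum_comm]
    have h1 : ∀ a : Fin N → A, ∑ b : A, ENNReal.ofReal (ν a * q a b) = ENNReal.ofReal (ν a) := by
      intro a
      rw [← ENNReal.ofReal_sum_of_nonneg (fun b _ => mul_nonneg (hν0 a) (hqpos a b).le)]
      rw [← Finset.mul_sum, hqrow, mul_one]
    simp_rw [h1]
    rw [← ENNReal.ofReal_sum_of_nonneg (fun a _ => hν0 a), hν1, ENNReal.ofReal_one]
  have hppos : ∀ b, 0 < p b := by
    intro b
    obtain ⟨a₀, ha₀⟩ : ∃ a₀, 0 < ν a₀ := by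
      by_contra h
      push_neg at h
      have : ∀ a, ν a = 0 := fun a => le_antisymm (h a) (hν0 a)
      simp [this] at hν1
    calc (0 : ENNReal) < ENNReal.ofReal (ν a₀ * q a₀ b) :=
          ENNReal.ofReal_pos.mpr (mul_pos ha₀ (hqpos a₀ b))
      _ ≤ p b := Finset.single_le_sum (f := fun a => ENNReal.ofReal (ν a * q a b))
          (fun _ _ => zero_le) (Finset.mem_univ a₀)
  -- atoms are singletons
  have hsingle : ∀ c : A, mAtom c = {c} := by
    intro c
    refine Set.eq_singleton_iff_unique_mem.mpr ⟨mem_mAtom_self c, fun c' hc' => ?_⟩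
    by_contra hne
    -- the contradiction
    set Sc : Finset A := Finset.univ.filter (fun b => b ∉ mAtom c) with hScdef
    have hcover : (Set.univ : Set (ℤ → A)) ⊆ E c ∪ ⋃ b ∈ Sc, D b := by
      intro x _
      by_cases hx : x 0 ∈ mAtom c
      · exact Or.inl hx
      · refine Or.inr ?_
        simp only [Set.mem_iUnion]
        exact ⟨x 0, by simp [hScdef, hx], rfl⟩
    have hcSc : c ∉ Sc := by simp [hScdef, mem_mAtom_self c]
    have hsubE : insert c Sc ⊆ Finset.univ.erase c' := by
      intro b hb
      rw [Finset.mem_erase]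
      rcases Finset.mem_insert.mp hb with rfl | hbSc
      · exact ⟨fun h => hne h.symm, Finset.mem_univ _⟩
      · refine ⟨fun h => ?_, Finset.mem_univ _⟩
        subst h
        exact (Finset.mem_filter.mp hbSc).2 hc'
    have hmain : (1 : ENNReal) ≤ ∑ b ∈ Finset.univ.erase c', p b := by
      calc (1 : ENNReal) = α Set.univ := (measure_univ).symm
        _ ≤ α (E c ∪ ⋃ b ∈ Sc, D b) := measure_mono hcover
        _ ≤ α (E c) + α (⋃ b ∈ Sc, D b) := measure_union_le _ _
        _ ≤ α (E c) + ∑ b ∈ Sc, α (D b) := by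
            gcongr
            exact measure_biUnion_finset_le _ _
        _ ≤ p c + ∑ b ∈ Sc, p b := by
            gcongr with b hb
            · rw [← hDE c]; exact hDp c
            · exact hDp b
        _ = ∑ b ∈ insert c Sc, p b := (Finset.sum_insert hcSc).symm
        _ ≤ ∑ b ∈ Finset.univ.erase c', p b :=
            Finset.sum_le_sum_of_subset hsubE
    have hsum : (∑ b ∈ Finset.univ.erase c', p b) + p c' = 1 := by
      rw [Finset.sum_erase_add _ _ (Finset.mem_univ c')]
      exact hptotal
    have : (1 : ENNReal) < 1 := by
      calc (1 : ENNReal) < 1 + p c' :=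
            ENNReal.lt_add_right ENNReal.one_ne_top (hppos c').ne'
        _ ≤ (∑ b ∈ Finset.univ.erase c', p b) + p c' := by gcongr
        _ = 1 := hsum
    exact absurd this (lt_irrefl _)
  intro s
  have : s = ⋃ c ∈ s, {c} := by simp
  rw [this]
  exact MeasurableSet.biUnion (Set.to_countable s) fun c _ => by rw [← hsingle c]; exact mAtom_measurable c

end Discrete

section Core
variable {A : Type*} [AddCommGroup A] [Fintype A]

/-- Extension of a finite word to `ℕ` by zero. -/
def extu (N n : ℕ) (u : Fin (N + n) → A) (m : ℕ) : A :=
  if h : m < N + n then u ⟨m, h⟩ else 0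

/-- The Markov weight of a finite word. -/
def Pfun (N n : ℕ) (q : (Fin N → A) → A → ℝ) (ν : (Fin N → A) → ℝ)
    (u : Fin (N + n) → A) : ℝ :=
  ν (fun j : Fin N => extu N n u j) *
    ∏ i ∈ Finset.range n, q (fun j : Fin N => extu N n u (i + j)) (extu N n u (i + N))

section Scalar
lemma scalar_estimate (ψ : AddChar A ℂ) (hψ : ψ ≠ 1) (w : A → ℝ) (m : ℝ) (hm0 : 0 ≤ m)
    (hml : ∀ b, m ≤ w b) (hw1 : ∀ b, w b ≤ 1) :
    ‖∑ b, ψ b * (w b : ℂ)‖ ≤ (1 - m) * ∑ b, w b := by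
  have hsum : ∑ b, ψ b = 0 :=
    AddChar.sum_eq_zero_iff_ne_zero.mpr (by simpa [← AddChar.one_eq_zero] using hψ)
  have key : ∑ b, ψ b * (w b : ℂ) = ∑ b, ψ b * ((w b - m : ℝ) : ℂ) := by
    have : ∑ b, ψ b * ((w b - m : ℝ) : ℂ)
        = ∑ b, ψ b * (w b : ℂ) - (∑ b, ψ b) * (m : ℂ) := by
      rw [Finset.sum_mul, ← Finset.sum_sub_distrib]
      refine Finset.sum_congr rfl fun b _ => ?_
      push_cast; ring
    rw [this, hsum, zero_mul, sub_zero]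
  rw [key]
  calc ‖∑ b, ψ b * ((w b - m : ℝ) : ℂ)‖ ≤ ∑ b, ‖ψ b * ((w b - m : ℝ) : ℂ)‖ :=
        norm_sum_le _ _
    _ = ∑ b, (w b - m) := by
        refine Finset.sum_congr rfl fun b _ => ?_
        rw [norm_mul, AddChar.norm_apply, one_mul, Complex.norm_real, Real.norm_eq_abs,
          abs_of_nonneg (sub_nonneg.mpr (hml b))]
    _ = (∑ b, w b) - (Fintype.card A : ℝ) * m := by
        rw [Finset.sum_sub_distrib, Finset.sum_const, Finset.card_univ, nsmul_eq_mul]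
    _ ≤ (1 - m) * ∑ b, w b := by
        have h1 : ∑ b, w b ≤ (Fintype.card A : ℝ) := by
          calc ∑ b, w b ≤ ∑ _b : A, (1 : ℝ) := Finset.sum_le_sum fun b _ => hw1 b
            _ = _ := by simp
        nlinarith
end Scalar

lemma core_estimate (N n : ℕ) (q : (Fin N → A) → A → ℝ) (ν : (Fin N → A) → ℝ)
    (hν0 : ∀ a, 0 ≤ ν a) (δ : ℝ) (hδpos : 0 < δ) (hδ1 : δ ≤ 1)
    (hδ : ∀ a b, δ ≤ q a b) (hq1 : ∀ a b, q a b ≤ 1)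
    (p : Fin (N + n) → Prop) [DecidablePred p]
    (hp : ∀ j, p j → N ≤ (j : ℕ) ∧ (j : ℕ) < n)
    (hsep : ∀ j j', p j → p j' → j ≠ j' → (j : ℕ) + N < (j' : ℕ) ∨ (j' : ℕ) + N < (j : ℕ))
    (ψ : Fin (N + n) → AddChar A ℂ) (hψ : ∀ j, p j → ψ j ≠ 1) :
    ‖∑ u : Fin (N + n) → A, (∏ j, ψ j (u j)) * (Pfun N n q ν u : ℂ)‖ ≤
      (1 - δ ^ (N + 1)) ^ (Finset.univ.filter p).card * ∑ u, Pfun N n q ν u := by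
  classical
  set θ := 1 - δ ^ (N + 1) with hθdef
  have hθ0 : 0 ≤ θ := sub_nonneg.mpr (pow_le_one₀ hδpos.le hδ1)
  set e := Equiv.piEquivPiSubtypeProd p (fun _ : Fin (N + n) => A) with hedef
  set merge : ({j : Fin (N + n) // p j} → A) → ({j : Fin (N + n) // ¬ p j} → A) →
      (Fin (N + n) → A) := fun h g => e.symm (h, g) with hmergedef
  have hmerge : ∀ h g j, merge h g j = if hj : p j then h ⟨j, hj⟩ else g ⟨j, hj⟩ := by
    intro h g j
    simp [hmergedef, hedef, Equiv.piEquivPiSubtypeProd_symm_apply]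
  have hsumC : ∀ F : (Fin (N + n) → A) → ℂ, ∑ u, F u = ∑ g, ∑ h, F (merge h g) := by
    intro F
    rw [← Equiv.sum_comp e.symm F, Fintype.sum_prod_type]
    exact Finset.sum_comm
  have hsumR : ∀ F : (Fin (N + n) → A) → ℝ, ∑ u, F u = ∑ g, ∑ h, F (merge h g) := by
    intro F
    rw [← Equiv.sum_comp e.symm F, Fintype.sum_prod_type]
    exact Finset.sum_comm
  have hextm : ∀ h g (m : ℕ) (hm : m < N + n),
      extu N n (merge h g) m
        = if hj : p ⟨m, hm⟩ then h ⟨⟨m, hm⟩, hj⟩ else g ⟨⟨m, hm⟩, hj⟩ := by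
    intro h g m hm
    rw [extu, dif_pos hm, hmerge]
  set qfac : ℕ → (Fin (N + n) → A) → ℝ :=
    fun i u => q (fun t : Fin N => extu N n u (i + t)) (extu N n u (i + N)) with hqfacdef
  have hqfac0 : ∀ i u, 0 ≤ qfac i u := fun i u => by
    have h := hδ (fun t : Fin N => extu N n u (i + t)) (extu N n u (i + N))
    simp only [hqfacdef]; linarith
  have hqfacδ : ∀ i u, δ ≤ qfac i u := fun i u =>
    hδ (fun t : Fin N => extu N n u (i + t)) (extu N n u (i + N))
  have hqfac1 : ∀ i u, qfac i u ≤ 1 := fun i u =>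
    hq1 (fun t : Fin N => extu N n u (i + t)) (extu N n u (i + N))
  have hcong : ∀ (i : ℕ) u u', (∀ m, i ≤ m → m ≤ i + N → extu N n u m = extu N n u' m) →
      qfac i u = qfac i u' := by
    intro i u u' hmm
    have h1 : (fun t : Fin N => extu N n u (i + t)) = fun t : Fin N => extu N n u' (i + t) :=
      funext fun t => hmm (i + t) (by omega) (by omega)
    have h2 : extu N n u (i + N) = extu N n u' (i + N) := hmm (i + N) (by omega) le_rfl
    simp only [hqfacdef, h1, h2]
  have hPq : ∀ u, Pfun N n q ν u
      = ν (fun j : Fin N => extu N n u j) * ∏ i ∈ Finset.range n, qfac i u := fun u => rfl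
  -- the blocks of transition factors attached to the selected positions
  set Fj : {j : Fin (N + n) // p j} → Finset ℕ :=
    fun jt => Finset.Icc ((jt.1 : ℕ) - N) (jt.1 : ℕ) with hFjdef
  have hjN : ∀ jt : {j : Fin (N + n) // p j}, N ≤ (jt.1 : ℕ) ∧ (jt.1 : ℕ) < n :=
    fun jt => hp jt.1 jt.2
  have hFsub : ∀ jt, Fj jt ⊆ Finset.range n := by
    intro jt i hi
    rw [hFjdef] at hi
    simp only [Finset.mem_Icc] at hi
    have := hjN jt
    exact Finset.mem_range.mpr (by omega)
  have hFcard : ∀ jt, (Fj jt).card = N + 1 := by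
    intro jt
    rw [hFjdef]
    simp only [Nat.card_Icc]
    have := hjN jt
    omega
  have hFdisj : ∀ jt jt' : {j : Fin (N + n) // p j}, jt ≠ jt' → Disjoint (Fj jt) (Fj jt') := by
    intro jt jt' hne
    rw [Finset.disjoint_left]
    intro i hi hi'
    rw [hFjdef] at hi hi'
    simp only [Finset.mem_Icc] at hi hi'
    have hv : jt.1 ≠ jt'.1 := fun h => hne (Subtype.ext h)
    have := hsep jt.1 jt'.1 jt.2 jt'.2 hv
    have h1 := hjN jt
    have h2 := hjN jt'
    omega
  set B : Finset ℕ := Finset.univ.biUnion Fj with hBdef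
  have hBsub : B ⊆ Finset.range n := by
    intro i hi
    rw [hBdef] at hi
    obtain ⟨jt, _, hjt⟩ := Finset.mem_biUnion.mp hi
    exact hFsub jt hjt
  have hnotB : ∀ i ∈ Finset.range n \ B, ∀ (m : ℕ) (hm : m < N + n),
      i ≤ m → m ≤ i + N → ¬ p ⟨m, hm⟩ := by
    intro i hi m hm h1 h2 hpm
    refine (Finset.mem_sdiff.mp hi).2 ?_
    refine Finset.mem_biUnion.mpr ⟨⟨⟨m, hm⟩, hpm⟩, Finset.mem_univ _, ?_⟩
    rw [hFjdef]
    simp only [Finset.mem_Icc]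
    omega
  have honeB : ∀ (jt : {j : Fin (N + n) // p j}), ∀ i ∈ Fj jt, ∀ (m : ℕ) (hm : m < N + n),
      i ≤ m → m ≤ i + N → ∀ hpm : p ⟨m, hm⟩, (⟨⟨m, hm⟩, hpm⟩ : {j : Fin (N + n) // p j}) = jt := by
    intro jt i hi m hm h1 h2 hpm
    rw [hFjdef] at hi
    simp only [Finset.mem_Icc] at hi
    by_cases hmj : (⟨m, hm⟩ : Fin (N + n)) = jt.1
    · exact Subtype.ext hmj
    · exfalso
      have := hsep ⟨m, hm⟩ jt.1 hpm jt.2 hmj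
      have h3 := hjN jt
      simp only [] at this
      omega
  have hnotp_low : ∀ (m : ℕ) (hm : m < N + n), m < N → ¬ p ⟨m, hm⟩ := by
    intro m hm hmN hpm
    have := hp ⟨m, hm⟩ hpm
    simp only [] at this
    omega
  -- factorization of the weight
  set Rest : ({j : Fin (N + n) // ¬ p j} → A) → ℝ := fun g =>
    ν (fun t : Fin N => extu N n (merge (fun _ => 0) g) t) *
      ∏ i ∈ Finset.range n \ B, qfac i (merge (fun _ => 0) g) with hRestdef
  set Qj : ({j : Fin (N + n) // ¬ p j} → A) → {j : Fin (N + n) // p j} → A → ℝ := fun g jt b =>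
    ∏ i ∈ Fj jt, qfac i (merge (fun _ => b) g) with hQjdef
  have hext_eq : ∀ (h h' : {j : Fin (N + n) // p j} → A) g (m : ℕ),
      (∀ (hm : m < N + n) (hpm : p ⟨m, hm⟩), h ⟨⟨m, hm⟩, hpm⟩ = h' ⟨⟨m, hm⟩, hpm⟩) →
      extu N n (merge h g) m = extu N n (merge h' g) m := by
    intro h h' g m hagree
    by_cases hm : m < N + n
    · rw [hextm h g m hm, hextm h' g m hm]
      by_cases hpm : p ⟨m, hm⟩
      · rw [dif_pos hpm, dif_pos hpm, hagree hm hpm]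
      · rw [dif_neg hpm, dif_neg hpm]
    · rw [extu, extu, dif_neg hm, dif_neg hm]
  have hPfac : ∀ g h, Pfun N n q ν (merge h g) = Rest g * ∏ jt, Qj g jt (h jt) := by
    intro g h
    rw [hPq, ← Finset.prod_sdiff hBsub, hBdef,
      Finset.prod_biUnion (fun x _ y _ hxy => hFdisj x y hxy)]
    have e1 : (fun t : Fin N => extu N n (merge h g) t)
        = fun t : Fin N => extu N n (merge (fun _ => 0) g) t := by
      funext t
      exact hext_eq h _ g t (fun hm hpm => absurd hpm (hnotp_low t hm t.isLt))
    have e2 : ∏ i ∈ Finset.range n \ B, qfac i (merge h g)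
        = ∏ i ∈ Finset.range n \ B, qfac i (merge (fun _ => 0) g) := by
      refine Finset.prod_congr rfl fun i hi => hcong i _ _ fun m h1 h2 => ?_
      refine hext_eq h _ g m fun hm hpm => absurd hpm (hnotB i hi m hm h1 h2)
    have e3 : ∀ jt, ∏ i ∈ Fj jt, qfac i (merge h g) = Qj g jt (h jt) := by
      intro jt
      rw [hQjdef]
      refine Finset.prod_congr rfl fun i hi => hcong i _ _ fun m h1 h2 => ?_
      refine hext_eq h _ g m fun hm hpm => ?_
      have := honeB jt i hi m hm h1 h2 hpm
      rw [this]
    rw [e1, e2]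
    rw [Finset.prod_congr rfl fun jt _ => e3 jt]
    rw [hRestdef]
    ring
  -- factorization of the character
  set Cg : ({j : Fin (N + n) // ¬ p j} → A) → ℂ := fun g =>
    ∏ jf : {j : Fin (N + n) // ¬ p j}, ψ jf.1 (g jf) with hCgdef
  have hchar : ∀ g h, (∏ j, ψ j (merge h g j))
      = (∏ jt : {j : Fin (N + n) // p j}, ψ jt.1 (h jt)) * Cg g := by
    intro g h
    rw [← Fintype.prod_subtype_mul_prod_subtype p (fun j => ψ j (merge h g j))]
    congr 1
    · refine Finset.prod_congr rfl fun jt _ => ?_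
      rw [hmerge]
      rw [dif_pos jt.2]
    · rw [hCgdef]
      refine Finset.prod_congr rfl fun jf _ => ?_
      rw [hmerge]
      rw [dif_neg jf.2]
  have hCg_norm : ∀ g, ‖Cg g‖ ≤ 1 := by
    intro g
    rw [hCgdef, norm_prod]
    refine le_of_eq ?_
    rw [Finset.prod_congr rfl fun jf _ => AddChar.norm_apply (ψ jf.1) (g jf)]
    simp
  have hQδ : ∀ g jt b, δ ^ (N + 1) ≤ Qj g jt b := by
    intro g jt b
    rw [hQjdef]
    calc δ ^ (N + 1) = ∏ _i ∈ Fj jt, δ := by rw [Finset.prod_const, hFcard]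
      _ ≤ _ := Finset.prod_le_prod (fun _ _ => hδpos.le) (fun i _ => hqfacδ i _)
  have hQ1 : ∀ g jt b, Qj g jt b ≤ 1 := by
    intro g jt b
    rw [hQjdef]
    exact Finset.prod_le_one (fun i _ => hqfac0 i _) (fun i _ => hqfac1 i _)
  have hRest0 : ∀ g, 0 ≤ Rest g := by
    intro g
    rw [hRestdef]
    exact mul_nonneg (hν0 _) (Finset.prod_nonneg fun i _ => hqfac0 i _)
  -- the per-`g` estimate
  set cT := (Finset.univ.filter p).card with hcTdef
  have hcT : Fintype.card {j : Fin (N + n) // p j} = cT := Fintype.card_subtype p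
  have hps : ∀ (f : {j : Fin (N + n) // p j} → A → ℂ),
      ∑ h : {j : Fin (N + n) // p j} → A, ∏ jt, f jt (h jt) = ∏ jt, ∑ b : A, f jt b := by
    intro f
    rw [Finset.prod_univ_sum]
    rw [show Fintype.piFinset (fun _ : {j : Fin (N + n) // p j} => (Finset.univ : Finset A))
        = Finset.univ from Fintype.piFinset_univ]
  have hpsR : ∀ (f : {j : Fin (N + n) // p j} → A → ℝ),
      ∑ h : {j : Fin (N + n) // p j} → A, ∏ jt, f jt (h jt) = ∏ jt, ∑ b : A, f jt b := by
    intro f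
    rw [Finset.prod_univ_sum]
    rw [show Fintype.piFinset (fun _ : {j : Fin (N + n) // p j} => (Finset.univ : Finset A))
        = Finset.univ from Fintype.piFinset_univ]
  have hinner : ∀ g, (∑ h, (∏ j, ψ j (merge h g j)) * (Pfun N n q ν (merge h g) : ℂ))
      = Cg g * (Rest g : ℂ) *
        ∏ jt : {j : Fin (N + n) // p j}, ∑ b : A, ψ jt.1 b * (Qj g jt b : ℂ) := by
    intro g
    have step : ∀ h, (∏ j, ψ j (merge h g j)) * (Pfun N n q ν (merge h g) : ℂ)
        = Cg g * (Rest g : ℂ) *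
          ∏ jt : {j : Fin (N + n) // p j}, (ψ jt.1 (h jt) * (Qj g jt (h jt) : ℂ)) := by
      intro h
      rw [hchar g h, hPfac g h]
      push_cast
      rw [Finset.prod_mul_distrib]
      ring
    rw [Finset.sum_congr rfl fun h _ => step h, ← Finset.mul_sum]
    congr 1
    exact hps (fun jt b => ψ jt.1 b * (Qj g jt b : ℂ))
  have hinnerP : ∀ g, (∑ h, Pfun N n q ν (merge h g))
      = Rest g * ∏ jt : {j : Fin (N + n) // p j}, ∑ b : A, Qj g jt b := by
    intro g
    rw [Finset.sum_congr rfl fun h _ => hPfac g h, ← Finset.mul_sum]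
    congr 1
    rw [show (Finset.univ : Finset ({j : Fin (N + n) // p j} → A))
        = Fintype.piFinset (fun _ => (Finset.univ : Finset A)) from (Fintype.piFinset_univ).symm]
    exact (Finset.prod_univ_sum _ _).symm
  have key : ∀ g, ‖∑ h, (∏ j, ψ j (merge h g j)) * (Pfun N n q ν (merge h g) : ℂ)‖
      ≤ θ ^ cT * ∑ h, Pfun N n q ν (merge h g) := by
    intro g
    rw [hinner g, hinnerP g]
    have hZ : ‖∏ jt : {j : Fin (N + n) // p j}, ∑ b : A, ψ jt.1 b * (Qj g jt b : ℂ)‖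
        = ∏ jt : {j : Fin (N + n) // p j}, ‖∑ b : A, ψ jt.1 b * (Qj g jt b : ℂ)‖ :=
      norm_prod _ _
    have hY : ‖((Rest g : ℝ) : ℂ)‖ = Rest g := by
      rw [Complex.norm_real, Real.norm_eq_abs, abs_of_nonneg (hRest0 g)]
    rw [norm_mul, norm_mul, hY, hZ]
    calc ‖Cg g‖ * Rest g * ∏ jt, ‖∑ b : A, ψ jt.1 b * (Qj g jt b : ℂ)‖
        ≤ 1 * Rest g * ∏ jt : {j : Fin (N + n) // p j}, (θ * ∑ b : A, Qj g jt b) := by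
          refine mul_le_mul (mul_le_mul (hCg_norm g) le_rfl (hRest0 g) zero_le_one) ?_
            (Finset.prod_nonneg fun jt _ => norm_nonneg _)
            (mul_nonneg zero_le_one (hRest0 g))
          refine Finset.prod_le_prod (fun jt _ => norm_nonneg _) (fun jt _ => ?_)
          exact scalar_estimate (ψ jt.1) (hψ jt.1 jt.2) (Qj g jt) (δ ^ (N + 1))
            (pow_nonneg hδpos.le _) (hQδ g jt) (hQ1 g jt)
      _ = θ ^ cT * (Rest g * ∏ jt, ∑ b : A, Qj g jt b) := by
          rw [Finset.prod_mul_distrib, Finset.prod_const, Finset.card_univ, hcT]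
          ring
  -- summation over `g`
  rw [hsumC, hsumR fun u => Pfun N n q ν u]
  calc ‖∑ g, ∑ h, (∏ j, ψ j (merge h g j)) * (Pfun N n q ν (merge h g) : ℂ)‖
      ≤ ∑ g, ‖∑ h, (∏ j, ψ j (merge h g j)) * (Pfun N n q ν (merge h g) : ℂ)‖ :=
        norm_sum_le _ _
    _ ≤ ∑ g, θ ^ cT * ∑ h, Pfun N n q ν (merge h g) := Finset.sum_le_sum fun g _ => key g
    _ = θ ^ cT * ∑ g, ∑ h, Pfun N n q ν (merge h g) := by rw [Finset.mul_sum]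

end Core

lemma exists_separated_subset (N : ℕ) (T : Finset ℤ) : ∃ T' ⊆ T,
    (∀ a ∈ T', ∀ b ∈ T', a ≠ b → (N : ℤ) + 1 ≤ |a - b|) ∧ T.card ≤ (N + 1) * T'.card := by
  classical
  induction T using Finset.strongInduction with
  | _ T ih =>
    rcases T.eq_empty_or_nonempty with rfl | hne
    · exact ⟨∅, Finset.Subset.refl _, by simp, by simp⟩
    · set t := T.min' hne with ht
      set T₁ := T.filter (fun s => t + N + 1 ≤ s) with hT₁
      have htT₁ : t ∉ T₁ := by
        simp only [hT₁, Finset.mem_filter]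
        rintro ⟨-, h⟩; omega
      have hss : T₁ ⊂ T := ⟨Finset.filter_subset _ _, fun hsub => htT₁ (hsub (T.min'_mem hne))⟩
      obtain ⟨T', hsub, hsepa, hcard⟩ := ih T₁ hss
      have htT' : t ∉ T' := fun h => htT₁ (hsub h)
      refine ⟨insert t T', ?_, ?_, ?_⟩
      · exact Finset.insert_subset (T.min'_mem hne) (hsub.trans (Finset.filter_subset _ _))
      · intro a ha b hb hab
        rcases Finset.mem_insert.mp ha with rfl | ha' <;>
          rcases Finset.mem_insert.mp hb with rfl | hb'
        · exact absurd rfl hab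
        · have := (Finset.mem_filter.mp (hsub hb')).2
          rw [abs_sub_comm]; rw [abs_of_nonneg (by omega)]; omega
        · have := (Finset.mem_filter.mp (hsub ha')).2
          rw [abs_of_nonneg (by omega)]; omega
        · exact hsepa a ha' b hb' hab
      · have hsplit : (T.filter (fun s => ¬ (t + N + 1 ≤ s))).card + T₁.card = T.card := by
          rw [hT₁, add_comm]
          exact Finset.card_filter_add_card_filter_not (fun s => t + (N:ℤ) + 1 ≤ s)
        have hsmall : T.filter (fun s => ¬ (t + N + 1 ≤ s)) ⊆ Finset.Icc t (t + N) := by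
          intro s hs
          rcases Finset.mem_filter.mp hs with ⟨hsT, hns⟩
          have := T.min'_le s hsT
          rw [Finset.mem_Icc]; omega
        have h2 : (T.filter (fun s => ¬ (t + N + 1 ≤ s))).card ≤ N + 1 := by
          calc _ ≤ (Finset.Icc t (t + N)).card := Finset.card_le_card hsmall
            _ = N + 1 := by rw [Int.card_Icc]; omega
        rw [Finset.card_insert_of_notMem htT', mul_add, mul_one]
        linarith


private theorem nstep_markov_harmonically_mixing' (A : Type*) [AddCommGroup A]
    [Fintype A] [MeasurableSpace A] (N : ℕ)
    (q : (Fin N → A) → A → ℝ) (hqpos : ∀ a b, 0 < q a b)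
    (hqrow : ∀ a, ∑ b, q a b = 1)
    (ν : (Fin N → A) → ℝ) (hν0 : ∀ a, 0 ≤ ν a) (hν1 : ∑ a, ν a = 1)
    (α : Measure (ℤ → A)) [IsProbabilityMeasure α]
    (hα : ∀ (k : ℤ) (n : ℕ) (f : ℕ → A),
      α {x | ∀ i : ℕ, i < N + n → x (k + i) = f i}
        = ENNReal.ofReal (ν (fun j : Fin N => f j) *
            ∏ i ∈ Finset.range n, q (fun j : Fin N => f (i + j)) (f (i + N)))) :
    HarmonicallyMixing α := by
  classical
  -- Step 1: the hypotheses force the σ-algebra on `A` to be discrete.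
  have hα1 : ∀ f : ℕ → A,
      α {x | ∀ i : ℕ, i < N + 1 → x (-(N : ℤ) + i) = f i}
        = ENNReal.ofReal (ν (fun j : Fin N => f j) * q (fun j : Fin N => f j) (f N)) := by
    intro f
    have := hα (-(N : ℤ)) 1 f
    simpa only [Finset.prod_range_one, zero_add] using this
  have hdisc : ∀ s : Set A, MeasurableSet s :=
    discrete_of_markov N q hqpos hqrow ν hν0 hν1 α hα1
  haveI : DiscreteMeasurableSpace A := ⟨hdisc⟩
  -- Step 2: basic constants.
  have hq1 : ∀ a b, q a b ≤ 1 := by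
    intro a b
    calc q a b ≤ ∑ b', q a b' :=
          Finset.single_le_sum (fun b' _ => (hqpos a b').le) (Finset.mem_univ b)
      _ = 1 := hqrow a
  set δ : ℝ := Finset.univ.inf' Finset.univ_nonempty
    (fun ab : (Fin N → A) × A => q ab.1 ab.2) with hδdef
  have hδpos : 0 < δ := (Finset.lt_inf'_iff _).mpr (fun ab _ => hqpos ab.1 ab.2)
  have hδle : ∀ a b, δ ≤ q a b := fun a b => Finset.inf'_le _ (Finset.mem_univ (a, b))
  have hδ1 : δ ≤ 1 := (hδle (fun _ => 0) 0).trans (hq1 _ _)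
  set θ : ℝ := 1 - δ ^ (N + 1) with hθdef
  have hθ0 : 0 ≤ θ := sub_nonneg.mpr (pow_le_one₀ hδpos.le hδ1)
  have hθ1 : θ < 1 := by
    have : 0 < δ ^ (N + 1) := pow_pos hδpos _
    rw [hθdef]; linarith
  intro ε hε
  obtain ⟨M, hM⟩ := exists_pow_lt_of_lt_one hε hθ1
  refine ⟨(N + 1) * M, ?_⟩
  intro χ hfin hcard
  set S : Finset ℤ := hfin.toFinset with hSdef
  have hScard : {i | χ i ≠ 1}.ncard = S.card := Set.ncard_eq_toFinset_card _ hfin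
  rw [hScard] at hcard
  have hSne : S.Nonempty := Finset.card_pos.mp (by omega)
  have hmemS : ∀ s, s ∈ S ↔ χ s ≠ 1 := fun s => hfin.mem_toFinset
  -- Step 3: the separated subset.
  obtain ⟨S', hS'sub, hS'sep, hS'card⟩ := exists_separated_subset N S
  have hS'M : M < S'.card := by
    have h1 : (N + 1) * M < (N + 1) * S'.card := lt_of_lt_of_le hcard hS'card
    exact Nat.lt_of_mul_lt_mul_left h1
  -- Step 4: the window.
  set k : ℤ := S.min' hSne - N with hkdef
  set n : ℕ := (S.max' hSne - S.min' hSne).toNat + N + 1 with hndef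
  have hminmax : S.min' hSne ≤ S.max' hSne := S.min'_le _ (S.max'_mem hSne)
  have hwin : ∀ s ∈ S, ∃ t : ℕ, N ≤ t ∧ t < n ∧ s = k + t := by
    intro s hs
    have h1 := Finset.min'_le S s hs
    have h2 := Finset.le_max' S s hs
    refine ⟨(s - k).toNat, by omega, by omega, by omega⟩
  -- Step 5: reduce the integral to a finite sum.
  haveI : MeasurableSingletonClass (Fin (N + n) → A) := inferInstance
  set w : (ℤ → A) → (Fin (N + n) → A) := fun x j => x (k + (j : ℤ)) with hwdef
  have hwmeas : Measurable w := measurable_pi_lambda _ (fun j => measurable_pi_apply _)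
  set ψ : Fin (N + n) → AddChar A ℂ := fun j => χ (k + (j : ℤ)) with hψdef
  set G : (Fin (N + n) → A) → ℂ := fun u => ∏ j, ψ j (u j) with hGdef
  have hGw : ∀ x, charEval χ x = G (w x) := by
    intro x
    rw [charEval]
    have hsupp : (Function.mulSupport fun i => χ i (x i)) ⊆
        ↑(Finset.image (fun j : Fin (N + n) => k + (j : ℤ)) Finset.univ) := by
      intro i hi
      have hχi : χ i ≠ 1 := by
        intro h
        apply hi
        simp [h, AddChar.one_apply]
      obtain ⟨t, ht1, ht2, ht3⟩ := hwin i ((hmemS i).mpr hχi)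
      simp only [Finset.coe_image, Set.mem_image, Finset.mem_coe, Finset.coe_univ,
        Set.mem_univ, true_and, Set.image_univ, Set.mem_range]
      exact ⟨⟨t, by omega⟩, by rw [ht3]⟩
    rw [finprod_eq_prod_of_mulSupport_subset _ hsupp]
    rw [Finset.prod_image (fun j _ j' _ h => Fin.ext (by omega))]
  set μ' : Measure (Fin (N + n) → A) := Measure.map w α with hμ'def
  haveI : IsProbabilityMeasure μ' := Measure.isProbabilityMeasure_map hwmeas.aemeasurable
  have hGmeas : StronglyMeasurable G := (Measurable.of_discrete (f := G)).stronglyMeasurable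
  have hstep1 : ∫ x, charEval χ x ∂α = ∫ u, G u ∂μ' := by
    rw [hμ'def, integral_map hwmeas.aemeasurable hGmeas.aestronglyMeasurable]
    exact integral_congr_ae (Filter.Eventually.of_forall fun x => hGw x)
  have hcyl : ∀ u : Fin (N + n) → A, μ' {u} = ENNReal.ofReal (Pfun N n q ν u) := by
    intro u
    rw [hμ'def, Measure.map_apply hwmeas (measurableSet_singleton u)]
    have hset : w ⁻¹' {u} = {x | ∀ i : ℕ, i < N + n → x (k + i) = extu N n u i} := by
      ext x
      simp only [Set.mem_preimage, Set.mem_singleton_iff, Set.mem_setOf_eq]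
      constructor
      · intro h i hi
        rw [extu, dif_pos hi]
        exact congrFun h ⟨i, hi⟩
      · intro h
        funext j
        have := h j j.isLt
        rw [extu, dif_pos j.isLt] at this
        simpa using this
    rw [hset, hα k n (extu N n u)]
    rfl
  have hP0 : ∀ u, 0 ≤ Pfun N n q ν u := fun u =>
    mul_nonneg (hν0 _) (Finset.prod_nonneg fun i _ => (hqpos _ _).le)
  have hPtoReal : ∀ u, Pfun N n q ν u = (μ' {u}).toReal := fun u => by
    rw [hcyl u, ENNReal.toReal_ofReal (hP0 u)]
  have hsumP : ∑ u, Pfun N n q ν u = 1 := by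
    have h1 : ∫ _u, (1 : ℝ) ∂μ' = ∑ u, (μ' {u}).toReal • (1 : ℝ) :=
      integral_fintype (Integrable.of_finite)
    rw [integral_const, probReal_univ] at h1
    simp only [smul_eq_mul, mul_one, ENNReal.toReal_one, one_smul] at h1
    rw [Finset.sum_congr rfl fun u _ => hPtoReal u]
    exact h1.symm
  have hstep2 : ∫ u, G u ∂μ' = ∑ u, (Pfun N n q ν u) • G u := by
    rw [integral_fintype (Integrable.of_finite)]
    refine Finset.sum_congr rfl fun u _ => ?_
    rw [measureReal_def, hcyl u, ENNReal.toReal_ofReal (hP0 u)]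
  -- Step 6: apply the core estimate.
  set p : Fin (N + n) → Prop := fun j => (k + (j : ℤ)) ∈ S' with hpdef
  have hpfacts : ∀ j, p j → N ≤ (j : ℕ) ∧ (j : ℕ) < n := by
    intro j hj
    obtain ⟨t, ht1, ht2, ht3⟩ := hwin _ (hS'sub hj)
    have : (j : ℕ) = t := by omega
    omega
  have hsep' : ∀ j j', p j → p j' → j ≠ j' →
      (j : ℕ) + N < (j' : ℕ) ∨ (j' : ℕ) + N < (j : ℕ) := by
    intro j j' hj hj' hne
    have hne' : k + (j : ℤ) ≠ k + (j' : ℤ) := by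
      intro h
      exact hne (Fin.ext (by omega))
    have habs := hS'sep _ hj _ hj' hne'
    rcases le_total (k + (j : ℤ)) (k + (j' : ℤ)) with hle | hle
    · rw [abs_of_nonpos (by omega)] at habs
      left; omega
    · rw [abs_of_nonneg (by omega)] at habs
      right; omega
  have hψp : ∀ j, p j → ψ j ≠ 1 := by
    intro j hj
    exact (hmemS _).mp (hS'sub hj)
  have hcore := core_estimate N n q ν hν0 δ hδpos hδ1 hδle hq1 p hpfacts hsep' ψ hψp
  -- Step 7: identify the two sums and conclude.
  have hfc : (Finset.univ.filter p).card = S'.card := by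
    refine Finset.card_bij (fun j _ => k + (j : ℤ)) ?_ ?_ ?_
    · intro j hj
      exact (Finset.mem_filter.mp hj).2
    · intro j hj j' hj' h
      exact Fin.ext (by omega)
    · intro s hs
      obtain ⟨t, ht1, ht2, ht3⟩ := hwin s (hS'sub hs)
      have ht2' : t < N + n := by omega
      refine ⟨⟨t, ht2'⟩, Finset.mem_filter.mpr ⟨Finset.mem_univ _, ?_⟩, by rw [ht3]⟩
      show (k + ((⟨t, ht2'⟩ : Fin (N + n)) : ℤ)) ∈ S'
      rw [show (((⟨t, ht2'⟩ : Fin (N + n)) : ℕ) : ℤ) = (t : ℤ) from rfl, ← ht3]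
      exact hs
  have heq : ∑ u, (Pfun N n q ν u) • G u
      = ∑ u : Fin (N + n) → A, (∏ j, ψ j (u j)) * (Pfun N n q ν u : ℂ) := by
    refine Finset.sum_congr rfl fun u _ => ?_
    rw [hGdef]
    rw [Complex.real_smul]
    ring
  rw [hstep1, hstep2, heq]
  calc ‖∑ u : Fin (N + n) → A, (∏ j, ψ j (u j)) * (Pfun N n q ν u : ℂ)‖
      ≤ (1 - δ ^ (N + 1)) ^ (Finset.univ.filter p).card * ∑ u, Pfun N n q ν u := hcore
    _ = θ ^ S'.card := by rw [hsumP, hfc, mul_one]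
    _ ≤ θ ^ M := pow_le_pow_of_le_one hθ0 hθ1.le hS'M.le
    _ < ε := hM

/-- A stationary `N`-step Markov measure on `A^ℤ` whose transition probabilities
`q^a_b` (`a ∈ A^N`, `b ∈ A`) are all strictly positive is harmonically mixing. -/
theorem nstep_markov_harmonically_mixing (A : Type*) [AddCommGroup A]
    [Fintype A] [MeasurableSpace A] (N : ℕ)
    (q : (Fin N → A) → A → ℝ) (hqpos : ∀ a b, 0 < q a b)
    (hqrow : ∀ a, ∑ b, q a b = 1)
    (ν : (Fin N → A) → ℝ) (hν0 : ∀ a, 0 ≤ ν a) (hν1 : ∑ a, ν a = 1)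
    (α : Measure (ℤ → A)) [IsProbabilityMeasure α]
    (hα : ∀ (k : ℤ) (n : ℕ) (f : ℕ → A),
      α {x | ∀ i : ℕ, i < N + n → x (k + i) = f i}
        = ENNReal.ofReal (ν (fun j : Fin N => f j) *
            ∏ i ∈ Finset.range n, q (fun j : Fin N => f (i + j)) (f (i + N)))) :
    HarmonicallyMixing α :=
  nstep_markov_harmonically_mixing' A N q hqpos hqrow ν hν0 hν1 α hα
end
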